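/- With notation as above, for each point (y) in the image A, the fiber φ₂⁻¹(y) = {ω ∈ Ω : Σ ωi Qi(y) ≥ 0} is a nonempty convex-cone section of the sphere: it equals the intersection of the unit sphere in R^m with a convex cone, and hence is contractible. -/

import Mathlib

open scoped BigOperators

lemma contractible_aux {E : Type*} [NormedAddCommGroup E] [InnerProductSpace ℝ E]
    (c : Set E) (hconv : Convex ℝ c)
    (hcone : ∀ a ∈ c, ∀ t : ℝ, 0 ≤ t → t • a ∈ c)
    (hpos : ∀ a ∈ c, ∀ b ∈ c, 0 ≤ (inner ℝ a b : ℝ))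
    (s : Set E) (hs : s = Metric.sphere 0 1 ∩ c)
    (hne : s.Nonempty) : ContractibleSpace s := by
  obtain ⟨ω₀, hω₀⟩ := hne
  have hω₀s : ω₀ ∈ Metric.sphere (0:E) 1 ∩ c := hs ▸ hω₀
  have hω₀n : ‖ω₀‖ = 1 := by simpa using hω₀s.1
  have hmem : ∀ ω : s, (ω : E) ∈ Metric.sphere (0:E) 1 ∩ c := fun ω => hs ▸ ω.2
  set v : unitInterval × s → E :=
    fun p => ((1:ℝ) - (p.1 : ℝ)) • (p.2 : E) + (p.1 : ℝ) • ω₀ with hv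
  have hvne : ∀ p, v p ≠ 0 := by
    intro p hp0
    obtain ⟨t, ω⟩ := p
    have ht0 : (0:ℝ) ≤ t := t.2.1
    have ht1 : (t:ℝ) ≤ 1 := t.2.2
    have hωn : ‖(ω : E)‖ = 1 := by simpa using (hmem ω).1
    have hip : 0 ≤ (inner ℝ (ω : E) ω₀ : ℝ) := hpos _ (hmem ω).2 _ hω₀s.2
    have hsq : ‖v (t, ω)‖^2
        = (1 - (t:ℝ))^2 + 2 * ((1 - (t:ℝ)) * t) * (inner ℝ (ω : E) ω₀ : ℝ) + (t:ℝ)^2 := by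
      have := norm_add_sq_real (((1:ℝ) - (t:ℝ)) • (ω : E)) ((t:ℝ) • ω₀)
      simp only [hv] at *
      rw [this, norm_smul, norm_smul, real_inner_smul_left, real_inner_smul_right,
        hωn, hω₀n]
      have h1 : |1 - (t:ℝ)| = 1 - (t:ℝ) := abs_of_nonneg (by linarith)
      have h2 : |(t:ℝ)| = (t:ℝ) := abs_of_nonneg ht0
      simp [Real.norm_eq_abs, h1, h2]
      ring
    have hpos2 : 0 < ‖v (t, ω)‖^2 := by
      rw [hsq]
      nlinarith [mul_nonneg (mul_nonneg (by linarith : (0:ℝ) ≤ 1 - t) ht0) hip]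
    rw [hp0] at hpos2
    simp at hpos2
  have hvc : ∀ p, v p ∈ c := by
    intro ⟨t, ω⟩
    exact hconv (hmem ω).2 hω₀s.2 (by linarith [t.2.2] : (0:ℝ) ≤ 1 - t) t.2.1 (by ring)
  have hgs : ∀ p, ‖v p‖⁻¹ • v p ∈ s := by
    intro p
    rw [hs]
    refine ⟨?_, hcone _ (hvc p) _ (inv_nonneg.2 (norm_nonneg _))⟩
    simp [norm_smul, abs_of_nonneg, inv_mul_cancel₀ (norm_ne_zero_iff.2 (hvne p))]
  rw [contractible_iff_id_nullhomotopic]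
  refine ⟨⟨ω₀, hω₀⟩, ⟨⟨⟨fun p => ⟨‖v p‖⁻¹ • v p, hgs p⟩, ?_⟩, ?_, ?_⟩⟩⟩
  · apply Continuous.subtype_mk
    have hcv : Continuous v := by
      apply Continuous.add
      · exact ((continuous_const.sub (continuous_subtype_val.comp continuous_fst)).smul
          (continuous_subtype_val.comp continuous_snd))
      · exact ((continuous_subtype_val.comp continuous_fst).smul continuous_const)
    exact ((hcv.norm.inv₀ (fun p => norm_ne_zero_iff.2 (hvne p))).smul hcv)
  · intro ω
    have hωn : ‖(ω : E)‖ = 1 := by simpa using (hmem ω).1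
    ext
    simp [hv, hωn]
  · intro ω
    ext
    simp [hv, hω₀n]

/-- With `Q₁, …, Q_m` quadratic forms on `ℝ^(ℓ+1)` and
`Ω = {ω ∈ ℝ^m : |ω| = 1, ωᵢ ≤ 0 ∀ i}`, for each unit vector `y` with `Qᵢ(y) ≤ 0` for some `i`
(i.e. a point of the image `A`), the fiber `{ω ∈ Ω : ∑ ωᵢ Qᵢ(y) ≥ 0}` is nonempty, equals
the intersection of the unit sphere of `ℝ^m` with a convex cone, and is contractible. -/
theorem fiber_is_contractible_convex_cone_section (ℓ m : ℕ)
    (M : Fin m → Matrix (Fin (ℓ + 1)) (Fin (ℓ + 1)) ℝ)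
    (hM : ∀ i, (M i).IsSymm)
    (Q : Fin m → EuclideanSpace ℝ (Fin (ℓ + 1)) → ℝ)
    (hQ : ∀ i y, Q i y = ∑ a, ∑ b, M i a b * y a * y b)
    (Ω : Set (EuclideanSpace ℝ (Fin m)))
    (hΩ : Ω = {ω | ‖ω‖ = 1 ∧ ∀ i, ω i ≤ 0})
    (y : EuclideanSpace ℝ (Fin (ℓ + 1))) (hy : ‖y‖ = 1) (hyA : ∃ i, Q i y ≤ 0)
    (fib : Set (EuclideanSpace ℝ (Fin m)))
    (hfib : fib = {ω | ω ∈ Ω ∧ 0 ≤ ∑ i, ω i * Q i y}) :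
    fib.Nonempty ∧
      (∃ c : Set (EuclideanSpace ℝ (Fin m)), Convex ℝ c ∧
        (∀ a ∈ c, ∀ t : ℝ, 0 ≤ t → t • a ∈ c) ∧
        fib = Metric.sphere (0 : EuclideanSpace ℝ (Fin m)) 1 ∩ c) ∧
      ContractibleSpace fib := by
  set c : Set (EuclideanSpace ℝ (Fin m)) :=
    {ω | (∀ i, ω i ≤ 0) ∧ 0 ≤ ∑ i, ω i * Q i y} with hc
  have hconv : Convex ℝ c := by
    intro a ha b hb s t hs ht hst
    constructor
    · intro i
      have : (s • a + t • b) i = s * a i + t * b i := by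
        simp [PiLp.add_apply, PiLp.smul_apply, smul_eq_mul]
      rw [this]
      have := mul_nonneg hs (neg_nonneg.2 (ha.1 i))
      have := mul_nonneg ht (neg_nonneg.2 (hb.1 i))
      nlinarith
    · have : ∑ i, (s • a + t • b) i * Q i y
          = s * (∑ i, a i * Q i y) + t * (∑ i, b i * Q i y) := by
        rw [Finset.mul_sum, Finset.mul_sum, ← Finset.sum_add_distrib]
        refine Finset.sum_congr rfl fun i _ => ?_
        simp [PiLp.add_apply, PiLp.smul_apply, smul_eq_mul]
        ring
      rw [this]
      exact add_nonneg (mul_nonneg hs ha.2) (mul_nonneg ht hb.2)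
  have hcone : ∀ a ∈ c, ∀ t : ℝ, 0 ≤ t → t • a ∈ c := by
    intro a ha t ht
    constructor
    · intro i
      have : (t • a) i = t * a i := by simp [PiLp.smul_apply, smul_eq_mul]
      rw [this]
      exact mul_nonpos_of_nonneg_of_nonpos ht (ha.1 i)
    · have : ∑ i, (t • a) i * Q i y = t * ∑ i, a i * Q i y := by
        rw [Finset.mul_sum]
        refine Finset.sum_congr rfl fun i _ => ?_
        simp [PiLp.smul_apply, smul_eq_mul]; ring
      rw [this]
      exact mul_nonneg ht ha.2
  have hfibc : fib = Metric.sphere (0 : EuclideanSpace ℝ (Fin m)) 1 ∩ c := by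
    rw [hfib, hΩ]
    ext ω
    simp only [Set.mem_setOf_eq, Set.mem_inter_iff, mem_sphere_zero_iff_norm, hc]
    tauto
  have hpos : ∀ a ∈ c, ∀ b ∈ c, 0 ≤ (inner ℝ a b : ℝ) := by
    intro a ha b hb
    rw [PiLp.inner_apply]
    refine Finset.sum_nonneg fun i _ => ?_
    have := mul_nonneg (neg_nonneg.2 (ha.1 i)) (neg_nonneg.2 (hb.1 i)); simp only [RCLike.inner_apply, conj_trivial]; nlinarith
  obtain ⟨i, hi⟩ := hyA
  have hne : fib.Nonempty := by
    refine ⟨EuclideanSpace.single i (-1 : ℝ), ?_⟩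
    rw [hfib, hΩ]
    refine ⟨⟨by simp [EuclideanSpace.norm_single], fun j => ?_⟩, ?_⟩
    · rcases eq_or_ne j i with h | h <;> simp [EuclideanSpace.single_apply, h]
    · rw [Finset.sum_eq_single i]
      · simp [EuclideanSpace.single_apply]; linarith
      · intro j _ hj; simp [EuclideanSpace.single_apply, hj]
      · simp
  exact ⟨hne, ⟨c, hconv, hcone, hfibc⟩,
    contractible_aux c hconv hcone hpos fib hfibc hne⟩
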